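/- Let $n \geq 2$ and $d \geq 1$. A $d$-dimensional hypertournament $T$ on $n$ vertices is acyclic if and only if there exists a cochain $\alpha \in B^d(K_n^{(d+1)};\mathbb{R})$ (a coboundary) such that $\alpha(e) > 0$ for every oriented edge $e \in E(T)$. -/

import Mathlib

open Finset

variable {V : Type} [Fintype V] [LinearOrder V]

/-- Incidence number between a simplex `σ` and a codimension-one face `τ`:
`(-1)^i` where `i` is the position of the vertex `σ \ τ` in the increasing
ordering of `σ`, and `0` if `τ` is not a codimension-one face of `σ`. -/
def inc (σ τ : Finset V) : ℤ :=
  if τ ⊆ σ ∧ σ.card = τ.card + 1 then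
    ∑ v ∈ σ \ τ, (-1 : ℤ) ^ ((σ.filter (fun x => x < v)).card)
  else 0

/-- The augmented chain group of the simplicial complex `S` in (augmented) degree `k`:
the free module on the simplices of `S` having `k` vertices (so `k = 0` corresponds to
the empty simplex, and geometric dimension `k - 1`).  A basis simplex corresponds to the
oriented simplex `(v_0 v_1 ⋯)` with vertices listed in increasing order. -/
abbrev Chain (R : Type) [CommRing R] (S : Finset (Finset V)) (k : ℕ) : Type :=
  {σ : Finset V // σ ∈ S ∧ σ.card = k} → R

/-- The simplicial boundary map (augmented: in lowest degree it is the augmentation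
sending every vertex to `1`).  `bdry R S k : C_k → C_{k-1}` in the usual (geometric)
indexing of the paper. -/
def bdry (R : Type) [CommRing R] (S : Finset (Finset V)) (k : ℕ) :
    Chain R S (k + 1) →ₗ[R] Chain R S k :=
  LinearMap.pi fun τ => ∑ σ : {σ : Finset V // σ ∈ S ∧ σ.card = k + 1},
    (inc σ.1 τ.1 : R) • LinearMap.proj σ

/-- `S` is (the set of simplices of) a simplicial complex with vertex set `V`,
augmented with the empty simplex. -/
def IsComplex (S : Finset (Finset V)) : Prop :=
  ∅ ∈ S ∧ (∀ σ ∈ S, ∀ τ ⊆ σ, τ ∈ S) ∧ ∀ v : V, {v} ∈ S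

/-- The simplicial complex associated to a `(d+1)`-uniform hypergraph with edge set `E`:
the full `(d-1)`-skeleton on the vertex set together with the edges. -/
def cx (E : Finset (Finset V)) (d : ℕ) : Finset (Finset V) :=
  univ.filter (fun σ : Finset V => σ.card ≤ d) ∪ E

/-- The complex of the complete `(d+1)`-uniform hypergraph on `n` vertices. -/
def completeCx (n d : ℕ) : Finset (Finset (Fin n)) :=
  univ.filter (fun σ : Finset (Fin n) => σ.card ≤ d + 1)

/-- Coefficientwise inclusion of integral chains into real chains. -/
def castChain (S : Finset (Finset V)) (k : ℕ) : Chain ℤ S k →ₗ[ℤ] Chain ℝ S k :=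
  LinearMap.pi fun τ => ((Int.castAddHom ℝ).toIntLinearMap).comp (LinearMap.proj τ)

/-- The basis chain (increasingly ordered oriented simplex) corresponding to a simplex
of `S` with `k` vertices. -/
def basisChain (R : Type) [CommRing R] {S : Finset (Finset V)} {k : ℕ}
    (σ : {σ : Finset V // σ ∈ S ∧ σ.card = k}) : Chain R S k :=
  Pi.single σ 1

theorem gordan_cone {W : Type} [NormedAddCommGroup W] [NormedSpace ℝ W]
    [FiniteDimensional ℝ W] {I : Type} [Fintype I] (w : I → W) :
    (∀ c : I → ℝ, (∀ i, 0 ≤ c i) → ∑ i, c i • w i = 0 → c = 0) ↔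
      ∃ γ : Module.Dual ℝ W, ∀ i, 0 < γ (w i) := by
  classical
  constructor
  · intro h
    by_cases hI : Nonempty I
    · let L : (I → ℝ) →ₗ[ℝ] W :=
        { toFun := fun c => ∑ i, c i • w i
          map_add' := by intro x y; simp [add_smul, Finset.sum_add_distrib]
          map_smul' := by intro r x; simp [smul_smul, Finset.smul_sum] }
      have hLcont : Continuous L := L.continuous_of_finiteDimensional
      set C : Set W := L '' stdSimplex ℝ I with hC
      have hconv : Convex ℝ C := (convex_stdSimplex ℝ I).linear_image L
      have hcomp : IsCompact C := (isCompact_stdSimplex ℝ I).image hLcont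
      have hclosed : IsClosed C := hcomp.isClosed
      have h0 : (0 : W) ∉ C := by
        rintro ⟨c, ⟨hc0, hc1⟩, hLc⟩
        have := h c hc0 hLc
        rw [this] at hc1
        simp at hc1
      obtain ⟨f, u, hf0, hfC⟩ := geometric_hahn_banach_point_closed hconv hclosed h0
      refine ⟨f.toLinearMap, fun i => ?_⟩
      have hwi : w i ∈ C := by
        refine ⟨Pi.single i 1, ?_, ?_⟩
        · refine ⟨fun j => ?_, ?_⟩
          · by_cases hji : j = i <;> simp [Pi.single_apply, hji]
          · simp [Pi.single_apply]
        · simp [L, Pi.single_apply, ite_smul]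
      have := hfC _ hwi
      have hf00 : f 0 = 0 := map_zero f
      rw [hf00] at hf0
      simpa using lt_trans hf0 this
    · exact ⟨0, fun i => ((not_nonempty_iff.mp hI).false i).elim⟩
  · rintro ⟨γ, hγ⟩ c hc hsum
    have key : ∑ i, c i * γ (w i) = 0 := by
      have := congrArg γ hsum
      simpa [map_sum] using this
    funext i
    have hall := (Finset.sum_eq_zero_iff_of_nonneg (fun j _ =>
      mul_nonneg (hc j) (hγ j).le)).mp key i (Finset.mem_univ i)
    have := (hγ i).ne'
    rcases mul_eq_zero.mp hall with h | h
    · exact h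
    · exact absurd h this

/-- A `d`-dimensional hypertournament `T` on `n` vertices — a choice
of sign `ε σ ∈ {1, -1}` for each `(d+1)`-subset `σ` of `[n]`, the chosen oriented edge
being `ε σ • σ` (with `σ` increasingly ordered) in `C_d(K_n^{(d+1)})` — is acyclic
(the convex cone generated by `E(T)` contains no nonzero reduced `d`-cycle) if and
only if there is a coboundary `α = γ ∘ ∂_d ∈ B^d(K_n^{(d+1)}; ℝ)` with `α(e) > 0`
for every `e ∈ E(T)`. -/
theorem hypertournament_acyclic_iff_coboundary (n d : ℕ) (hn : 2 ≤ n) (hd : 1 ≤ d)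
    (ε : {σ : Finset (Fin n) // σ ∈ completeCx n d ∧ σ.card = d + 1} → ℤ)
    (hε : ∀ σ, ε σ = 1 ∨ ε σ = -1) :
    (∀ z : Chain ℝ (completeCx n d) (d + 1),
        (∃ c : {σ : Finset (Fin n) // σ ∈ completeCx n d ∧ σ.card = d + 1} → ℝ,
          (∀ σ, 0 ≤ c σ) ∧ z = ∑ σ, c σ • ((ε σ : ℝ) • basisChain ℝ σ)) →
        bdry ℝ (completeCx n d) d z = 0 → z = 0) ↔
      ∃ γ : Module.Dual ℝ (Chain ℝ (completeCx n d) d),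
        ∀ σ, 0 < γ.comp (bdry ℝ (completeCx n d) d) ((ε σ : ℝ) • basisChain ℝ σ) := by
    classical
  have hεne : ∀ σ, (ε σ : ℝ) ≠ 0 := by
    intro σ; rcases hε σ with h | h <;> simp [h]
  set v : {σ : Finset (Fin n) // σ ∈ completeCx n d ∧ σ.card = d + 1} →
      Chain ℝ (completeCx n d) (d + 1) :=
    fun σ => (ε σ : ℝ) • basisChain ℝ σ with hv
  set w : {σ : Finset (Fin n) // σ ∈ completeCx n d ∧ σ.card = d + 1} →
      Chain ℝ (completeCx n d) d :=
    fun σ => bdry ℝ (completeCx n d) d (v σ) with hw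
  have heval : ∀ (c : {σ : Finset (Fin n) // σ ∈ completeCx n d ∧ σ.card = d + 1} → ℝ) (τ : {σ : Finset (Fin n) // σ ∈ completeCx n d ∧ σ.card = d + 1}),
      (∑ σ, c σ • v σ) τ = c τ * (ε τ : ℝ) := by
    intro c τ
    simp [hv, basisChain, Finset.sum_apply, Pi.single_apply, mul_ite,
      Finset.sum_ite_eq', mul_comm]
  have hbsum : ∀ (c : {σ : Finset (Fin n) // σ ∈ completeCx n d ∧ σ.card = d + 1} → ℝ),
      bdry ℝ (completeCx n d) d (∑ σ, c σ • v σ) = ∑ σ, c σ • w σ := by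
    intro c
    rw [map_sum]
    simp [hw, map_smul]
  constructor
  · intro h
    refine (gordan_cone w).mp ?_
    intro c hc hsum
    have hz := h (∑ σ, c σ • v σ) ⟨c, hc, rfl⟩ ((hbsum c).trans hsum)
    funext τ
    have := congrFun hz τ
    rw [heval] at this
    simp only [Pi.zero_apply] at this
    exact (mul_eq_zero.mp this).resolve_right (hεne τ)
  · rintro ⟨γ, hγ⟩ z ⟨c, hc, hz⟩ hb
    have hc0 : c = 0 := by
      refine (gordan_cone w).mpr ⟨γ, hγ⟩ c hc ?_
      rw [← hbsum c, ← hz, hb]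
    rw [hz, hc0]
    simp
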